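/- Let I=(0,1) and δ ∈ (0,1) ∪ (1,∞). For any continuously differentiable u : I → ℝ with u(1)=0, lim_{ρ→0⁺} ρ^{1-δ} u(ρ)² = 0, and ∫₀¹ ρ^{2-δ} u'(ρ)² dρ < ∞, one has ∫₀¹ ρ^{-δ} u(ρ)² dρ ≤ (4/|1-δ|²) ∫₀¹ ρ^{2-δ} u'(ρ)² dρ. -/

import Mathlib

open Real MeasureTheory Set Filter Topology

lemma young (c s t : ℝ) (hc : 0 < c) : |2*s*t| ≤ c*s^2 + c⁻¹*t^2 := by
  have h1 := sq_nonneg (c*s - t)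
  have h2 := sq_nonneg (c*s + t)
  have hc1 : c*c⁻¹ = 1 := mul_inv_cancel₀ hc.ne'
  rcases abs_cases (2*s*t) with ⟨h,_⟩|⟨h,_⟩ <;> rw [h] <;> nlinarith [hc, mul_pos hc hc]

lemma ptbound (m δ x A B : ℝ) (hm : 0 < m) (hx : 0 < x) :
    |x^(1-δ) * (2*A*B)| ≤ m/2*(x^(-δ)*A^2) + (m/2)⁻¹*(x^(2-δ)*B^2) := by
  have h1 : x^(1-δ) = x^(-δ/2) * x^((2-δ)/2) := by
    rw [← Real.rpow_add hx]; ring_nf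
  have h2 : x^(-δ) = x^(-δ/2) * x^(-δ/2) := by
    rw [← Real.rpow_add hx]; ring_nf
  have h3 : x^(2-δ) = x^((2-δ)/2) * x^((2-δ)/2) := by
    rw [← Real.rpow_add hx]; ring_nf
  have key := young (m/2) (x^(-δ/2)*A) (x^((2-δ)/2)*B) (by positivity)
  calc |x^(1-δ) * (2*A*B)| = |2*(x^(-δ/2)*A)*(x^((2-δ)/2)*B)| := by rw [h1]; ring_nf
    _ ≤ m/2*(x^(-δ/2)*A)^2 + (m/2)⁻¹*(x^((2-δ)/2)*B)^2 := key
    _ = m/2*(x^(-δ)*A^2) + (m/2)⁻¹*(x^(2-δ)*B^2) := by rw [h2, h3]; ring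

lemma hardy_key (δ : ℝ) (hδ : δ ≠ 1) (u u' : ℝ → ℝ)
    (hderiv : ∀ ρ ∈ Ioo (0:ℝ) 1, HasDerivAt u (u' ρ) ρ)
    (hcont : ContinuousOn u' (Ioo (0:ℝ) 1))
    (hint' : IntegrableOn (fun ρ : ℝ => ρ ^ (2 - δ) * (u' ρ) ^ 2) (Ioo 0 1))
    (a b : ℝ) (ha : 0 < a) (hab : a ≤ b) (hb : b < 1) :
    ∫ ρ in a..b, ρ^(-δ) * u ρ^2 ≤
      (2/|1-δ|)*(a^(1-δ)*u a^2 + b^(1-δ)*u b^2)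
      + (4/|1-δ|^2) * ∫ ρ in Ioo (0:ℝ) 1, ρ^(2-δ)*u' ρ^2 := by
  set m : ℝ := |1-δ| with hmdef
  have hm : 0 < m := abs_pos.2 (sub_ne_zero.2 (Ne.symm hδ))
  have hsub : uIcc a b ⊆ Ioo (0:ℝ) 1 := by
    rw [uIcc_of_le hab]
    exact fun x hx => ⟨lt_of_lt_of_le ha hx.1, lt_of_le_of_lt hx.2 hb⟩
  have hxpos : ∀ x ∈ uIcc a b, (0:ℝ) < x := fun x hx => (hsub hx).1
  have hucont : ContinuousOn u (Ioo (0:ℝ) 1) := fun x hx =>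
    (hderiv x hx).continuousAt.continuousWithinAt
  -- continuity facts on uIcc a b
  have crpow : ∀ c : ℝ, ContinuousOn (fun x : ℝ => x ^ c) (uIcc a b) := fun c =>
    ContinuousOn.rpow_const continuousOn_id (fun x hx => Or.inl (hxpos x hx).ne')
  have cu : ContinuousOn u (uIcc a b) := hucont.mono hsub
  have cu' : ContinuousOn u' (uIcc a b) := hcont.mono hsub
  have cf1 : ContinuousOn (fun x : ℝ => (1-δ) * x^(-δ) * u x^2) (uIcc a b) :=
    ((continuousOn_const.mul (crpow (-δ))).mul (cu.pow 2))
  have cf2 : ContinuousOn (fun x : ℝ => x^(1-δ) * (2*u x*u' x)) (uIcc a b) :=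
    (crpow (1-δ)).mul ((continuousOn_const.mul cu).mul cu')
  have cf3 : ContinuousOn (fun x : ℝ => x^(-δ) * u x^2) (uIcc a b) :=
    (crpow (-δ)).mul (cu.pow 2)
  have cf4 : ContinuousOn (fun x : ℝ => x^(2-δ) * u' x^2) (uIcc a b) :=
    (crpow (2-δ)).mul (cu'.pow 2)
  have hI1 : IntervalIntegrable (fun x : ℝ => (1-δ) * x^(-δ) * u x^2) volume a b :=
    cf1.intervalIntegrable
  have hI2 : IntervalIntegrable (fun x : ℝ => x^(1-δ) * (2*u x*u' x)) volume a b :=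
    cf2.intervalIntegrable
  have hI3 : IntervalIntegrable (fun x : ℝ => x^(-δ) * u x^2) volume a b :=
    cf3.intervalIntegrable
  have hI4 : IntervalIntegrable (fun x : ℝ => x^(2-δ) * u' x^2) volume a b :=
    cf4.intervalIntegrable
  -- integration by parts
  have hU : ∀ x ∈ uIcc a b, HasDerivAt (fun y : ℝ => y^(1-δ)) ((1-δ) * x^(-δ)) x := by
    intro x hx
    have h := Real.hasDerivAt_rpow_const (x := x) (p := 1-δ) (Or.inl (hxpos x hx).ne')
    have : (1-δ) - 1 = -δ := by ring
    rwa [this] at h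
  have hV : ∀ x ∈ uIcc a b, HasDerivAt (fun y : ℝ => u y^2) (2*u x*u' x) x := by
    intro x hx
    have h := (hderiv x (hsub hx)).pow 2
    norm_num at h
    exact h
  have hI1' : IntervalIntegrable (fun x : ℝ => (1-δ) * x^(-δ)) volume a b :=
    (continuousOn_const.mul (crpow (-δ))).intervalIntegrable
  have hI2' : IntervalIntegrable (fun x : ℝ => 2*u x*u' x) volume a b :=
    ((continuousOn_const.mul cu).mul cu').intervalIntegrable
  have ibp : (∫ x in a..b, ((1-δ) * x^(-δ) * u x^2 + x^(1-δ) * (2*u x*u' x)))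
      = b^(1-δ)*u b^2 - a^(1-δ)*u a^2 :=
    intervalIntegral.integral_deriv_mul_eq_sub hU hV hI1' hI2'
  rw [intervalIntegral.integral_add hI1 hI2] at ibp
  set J := ∫ x in a..b, x^(-δ) * u x^2 with hJdef
  set X := ∫ x in a..b, x^(1-δ) * (2*u x*u' x) with hXdef
  set B := ∫ x in a..b, x^(2-δ) * u' x^2 with hBdef
  set K := ∫ ρ in Ioo (0:ℝ) 1, ρ^(2-δ)*u' ρ^2 with hKdef
  have hsplit : (∫ x in a..b, (1-δ) * x^(-δ) * u x^2) = (1-δ) * J := by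
    rw [hJdef, ← intervalIntegral.integral_const_mul]
    congr 1; ext x; ring
  rw [hsplit] at ibp
  -- ibp : (1-δ) * J + X = b^(1-δ)*u b^2 - a^(1-δ)*u a^2
  have hJ0 : 0 ≤ J := by
    apply intervalIntegral.integral_nonneg hab
    intro x hx
    have hx0 : 0 < x := lt_of_lt_of_le ha hx.1
    positivity
  have hB0 : 0 ≤ B := by
    apply intervalIntegral.integral_nonneg hab
    intro x hx
    have hx0 : 0 < x := lt_of_lt_of_le ha hx.1
    positivity
  have hK0 : 0 ≤ K := by
    apply setIntegral_nonneg measurableSet_Ioo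
    intro x hx; have := hx.1; positivity
  -- |X| ≤ m/2 * J + (m/2)⁻¹ * B
  have hXbound : |X| ≤ m/2 * J + (m/2)⁻¹ * B := by
    have h1 : |X| ≤ ∫ x in a..b, |x^(1-δ) * (2*u x*u' x)| :=
      intervalIntegral.abs_integral_le_integral_abs hab
    have h2 : (∫ x in a..b, |x^(1-δ) * (2*u x*u' x)|)
        ≤ ∫ x in a..b, (m/2*(x^(-δ)*u x^2) + (m/2)⁻¹*(x^(2-δ)*u' x^2)) := by
      apply intervalIntegral.integral_mono_on hab hI2.abs
        ((hI3.const_mul (m/2)).add (hI4.const_mul (m/2)⁻¹))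
      intro x hx
      exact ptbound m δ x (u x) (u' x) hm (lt_of_lt_of_le ha hx.1)
    have h3 : (∫ x in a..b, (m/2*(x^(-δ)*u x^2) + (m/2)⁻¹*(x^(2-δ)*u' x^2)))
        = m/2 * J + (m/2)⁻¹ * B := by
      rw [intervalIntegral.integral_add (hI3.const_mul (m/2)) (hI4.const_mul (m/2)⁻¹),
        intervalIntegral.integral_const_mul, intervalIntegral.integral_const_mul]
    linarith
  -- B ≤ K
  have hBK : B ≤ K := by
    rw [hBdef, intervalIntegral.integral_of_le hab]
    apply setIntegral_mono_set hint'
    · filter_upwards [ae_restrict_mem measurableSet_Ioo] with x hx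
      have := hx.1; positivity
    · apply HasSubset.Subset.eventuallyLE
      intro x hx
      exact ⟨lt_of_lt_of_le ha (le_of_lt hx.1), lt_of_le_of_lt hx.2 hb⟩
  set Ba := a^(1-δ)*u a^2 with hBadef
  set Bb := b^(1-δ)*u b^2 with hBbdef
  have hBa0 : 0 ≤ Ba := mul_nonneg (Real.rpow_nonneg ha.le _) (sq_nonneg _)
  have hBb0 : 0 ≤ Bb := mul_nonneg (Real.rpow_nonneg (lt_of_lt_of_le ha hab).le _) (sq_nonneg _)
  have habs : |1-δ| * J ≤ Ba + Bb + (m/2 * J + (m/2)⁻¹ * K) := by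
    have e1 : (1-δ) * J = (Bb - Ba) - X := by linarith [ibp]
    have e2 : |(1-δ) * J| = m * J := by
      rw [abs_mul, abs_of_nonneg hJ0]
    have e3 : |(Bb - Ba) - X| ≤ |Bb - Ba| + |X| := abs_sub _ _
    have e4 : |Bb - Ba| ≤ Ba + Bb := abs_le.2 ⟨by linarith, by linarith⟩
    have e5 : (m/2)⁻¹ * B ≤ (m/2)⁻¹ * K := by
      apply mul_le_mul_of_nonneg_left hBK; positivity
    calc |1-δ| * J = |(1-δ) * J| := by rw [← e2]
      _ = |(Bb - Ba) - X| := by rw [e1]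
      _ ≤ |Bb - Ba| + |X| := e3
      _ ≤ Ba + Bb + (m/2 * J + (m/2)⁻¹ * B) := by linarith [hXbound]
      _ ≤ Ba + Bb + (m/2 * J + (m/2)⁻¹ * K) := by linarith
  -- conclude
  have hminv : (m/2)⁻¹ = 2/m := by field_simp
  rw [hminv] at habs
  have hstep : m/2 * J ≤ (Ba + Bb) + (2/m)*K := by
    have : |1-δ| = m := rfl
    rw [this] at habs; linarith
  have hfinal : J ≤ (2/m)*(Ba + Bb) + (4/m^2)*K := by
    have h := mul_le_mul_of_nonneg_left hstep (le_of_lt (by positivity : (0:ℝ) < 2/m))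
    have e : (2/m) * (m/2 * J) = J := by field_simp
    have e2 : (2/m) * ((Ba + Bb) + (2/m)*K) = (2/m)*(Ba + Bb) + (4/m^2)*K := by
      field_simp; ring
    rw [e, e2] at h; exact h
  exact hfinal

/-- Weighted Hardy inequality on (0,1): for `δ ∈ (0,1) ∪ (1,∞)`, a C¹ function `u`
on `(0,1)` with `u 1 = 0`, `ρ^(1-δ) u(ρ)² → 0` as `ρ → 0⁺`, and weighted square
integrability of `u` and `u'`, and any `0 < ε₀ < |1-δ|`,
`∫₀¹ ρ^(-δ) u² ≤ (ε₀(|1-δ|-ε₀))⁻¹ ∫₀¹ ρ^(2-δ) u'²`. -/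
theorem stmt1 (δ : ℝ) (hδ : δ ∈ Ioo (0:ℝ) 1 ∪ Ioi (1:ℝ))
    (u u' : ℝ → ℝ)
    (hderiv : ∀ ρ ∈ Ioo (0:ℝ) 1, HasDerivAt u (u' ρ) ρ)
    (hcont : ContinuousOn u' (Ioo (0:ℝ) 1))
    (hu1 : Tendsto u (nhdsWithin 1 (Iio (1:ℝ))) (nhds 0))
    (hu0 : Tendsto (fun ρ : ℝ => ρ ^ (1 - δ) * (u ρ) ^ 2)
      (nhdsWithin 0 (Ioi (0:ℝ))) (nhds 0))
    (hint : IntegrableOn (fun ρ : ℝ => ρ ^ (2 - δ) * (u ρ) ^ 2) (Ioo 0 1))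
    (hint' : IntegrableOn (fun ρ : ℝ => ρ ^ (2 - δ) * (u' ρ) ^ 2) (Ioo 0 1))
    :
    ∫ ρ in Ioo (0:ℝ) 1, ρ ^ (-δ) * (u ρ) ^ 2 ≤
      (4 / |1 - δ| ^ 2) * ∫ ρ in Ioo (0:ℝ) 1, ρ ^ (2 - δ) * (u' ρ) ^ 2 := by
  have hδ1 : δ ≠ 1 := by
    rcases hδ with h | h
    · exact ne_of_lt h.2
    · exact ne_of_gt h
  have hm : (0:ℝ) < |1-δ| := abs_pos.2 (sub_ne_zero.2 (Ne.symm hδ1))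
  set K := ∫ ρ in Ioo (0:ℝ) 1, ρ^(2-δ) * u' ρ^2 with hKdef
  have hK0 : 0 ≤ K := by
    apply setIntegral_nonneg measurableSet_Ioo
    intro x hx; have := hx.1; positivity
  set C := (4/|1-δ|^2) * K with hCdef
  have hC0 : 0 ≤ C := by positivity
  -- sequences
  set a : ℕ → ℝ := fun n => 1/(n+2) with hadef
  set b : ℕ → ℝ := fun n => 1 - 1/(n+2) with hbdef
  have hapos : ∀ n, 0 < a n := fun n => by positivity
  have hahalf : ∀ n, a n ≤ 1/2 := by
    intro n
    apply div_le_div_of_nonneg_left (by norm_num) (by norm_num)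
    have : (0:ℝ) ≤ n := Nat.cast_nonneg n
    linarith
  have hblt : ∀ n, b n < 1 := fun n => by
    have := hapos n; simp only [hbdef]; linarith [hapos n]
  have haleb : ∀ n, a n ≤ b n := by
    intro n; have h1 := hahalf n; simp only [hbdef]; linarith
  have haanti : ∀ {n k : ℕ}, n ≤ k → a k ≤ a n := by
    intro n k h
    apply div_le_div_of_nonneg_left (by norm_num) (by positivity)
    have : (n:ℝ) ≤ k := Nat.cast_le.2 h
    linarith
  have hbmono : ∀ {n k : ℕ}, n ≤ k → b n ≤ b k := by
    intro n k h; have := haanti h; simp only [hbdef]; linarith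
  -- limits
  have hbase : Tendsto (fun n : ℕ => 1/((n:ℝ)+2)) atTop (𝓝 0) := by
    have h2 := (tendsto_one_div_add_atTop_nhds_zero_nat (𝕜 := ℝ)).comp (tendsto_add_atTop_nat 1)
    have he : (fun n : ℕ => 1/((n:ℝ)+2)) = (fun n : ℕ => 1/((n:ℝ)+1)) ∘ (fun n => n + 1) := by
      funext n; simp only [Function.comp]; push_cast; ring_nf
    rw [he]; exact h2
  have ha0 : Tendsto a atTop (𝓝[>] 0) := by
    apply tendsto_nhdsWithin_of_tendsto_nhds_of_eventually_within _ hbase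
    exact Eventually.of_forall fun n => hapos n
  have hb1 : Tendsto b atTop (𝓝[<] 1) := by
    apply tendsto_nhdsWithin_of_tendsto_nhds_of_eventually_within
    · rw [show (1:ℝ) = 1 - 0 by norm_num]
      exact tendsto_const_nhds.sub hbase
    · exact Eventually.of_forall fun n => hblt n
  -- Cn → C
  set Cn : ℕ → ℝ := fun n =>
    (2/|1-δ|)*((a n)^(1-δ)*u (a n)^2 + (b n)^(1-δ)*u (b n)^2) + C with hCndef
  have hCn : Tendsto Cn atTop (𝓝 C) := by
    have t1 : Tendsto (fun n => (a n)^(1-δ)*u (a n)^2) atTop (𝓝 0) := hu0.comp ha0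
    have tb : Tendsto (fun n => (b n)^(1-δ)) atTop (𝓝 1) := by
      have hc : ContinuousAt (fun x : ℝ => x^(1-δ)) 1 :=
        Real.continuousAt_rpow_const 1 (1-δ) (Or.inl one_ne_zero)
      have := hc.tendsto.comp (hb1.mono_right nhdsWithin_le_nhds)
      simpa [Real.one_rpow, Function.comp_def] using this
    have tu : Tendsto (fun n => u (b n)^2) atTop (𝓝 0) := by
      have := (hu1.comp hb1).pow 2
      simpa using this
    have t2 : Tendsto (fun n => (b n)^(1-δ)*u (b n)^2) atTop (𝓝 0) := by
      have := tb.mul tu; simpa using this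
    have : Tendsto Cn atTop (𝓝 ((2/|1-δ|)*(0+0) + C)) :=
      (tendsto_const_nhds.mul (t1.add t2)).add tendsto_const_nhds
    simpa using this
  -- lintegral machinery
  set f : ℝ → ℝ := fun ρ => ρ^(-δ)*u ρ^2 with hfdef
  have hucont : ContinuousOn u (Ioo (0:ℝ) 1) := fun x hx =>
    (hderiv x hx).continuousAt.continuousWithinAt
  have hfc : ContinuousOn f (Ioo (0:ℝ) 1) := by
    apply ContinuousOn.mul _ (hucont.pow 2)
    exact ContinuousOn.rpow_const continuousOn_id (fun x hx => Or.inl hx.1.ne')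
  set μ := volume.restrict (Ioo (0:ℝ) 1) with hμdef
  have hfm : AEStronglyMeasurable f μ := hfc.aestronglyMeasurable measurableSet_Ioo
  have hfnn : 0 ≤ᵐ[μ] f := by
    filter_upwards [ae_restrict_mem measurableSet_Ioo] with x hx
    have := hx.1; positivity
  have heq : ∫ ρ in Ioo (0:ℝ) 1, f ρ = (∫⁻ ρ, ENNReal.ofReal (f ρ) ∂μ).toReal :=
    integral_eq_lintegral_of_nonneg_ae hfnn hfm
  set F : ℝ → ENNReal := fun ρ => ENNReal.ofReal (f ρ) with hFdef
  set Fn : ℕ → ℝ → ENNReal := fun n => (Ioo (a n) (b n)).indicator F with hFndef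
  have hFaem : AEMeasurable F μ :=
    ENNReal.measurable_ofReal.comp_aemeasurable (hfc.aemeasurable measurableSet_Ioo)
  have hFnaem : ∀ n, AEMeasurable (Fn n) μ := fun n =>
    (hFaem.indicator measurableSet_Ioo)
  have hssub : ∀ {n k : ℕ}, n ≤ k → Ioo (a n) (b n) ⊆ Ioo (a k) (b k) := by
    intro n k h; exact Ioo_subset_Ioo (haanti h) (hbmono h)
  have hFnmono : ∀ x, Monotone fun n => Fn n x := by
    intro x n k h
    exact Set.indicator_le_indicator_of_subset (hssub h) (fun _ => zero_le) x
  have hsup : ∀ x ∈ Ioo (0:ℝ) 1, (⨆ n, Fn n x) = F x := by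
    intro x hx
    obtain ⟨n, hn⟩ := exists_nat_one_div_lt (lt_min hx.1 (by linarith [hx.2] : (0:ℝ) < 1 - x))
    have hmem : x ∈ Ioo (a n) (b n) := by
      have h1 : a n < 1/((n:ℝ)+1) := by
        apply div_lt_div_of_pos_left (by norm_num) (by positivity)
        linarith
      have h2 : (1:ℝ)/((n:ℝ)+1) < min x (1-x) := hn
      constructor
      · calc a n < 1/((n:ℝ)+1) := h1
          _ < min x (1-x) := h2
          _ ≤ x := min_le_left _ _
      · have : 1/((n:ℝ)+1) < 1 - x := lt_of_lt_of_le h2 (min_le_right _ _)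
        have := lt_of_lt_of_le h1 (le_of_lt this)
        simp only [hbdef]; linarith
    apply le_antisymm
    · exact iSup_le fun k => Set.indicator_le_self _ _ x
    · refine le_iSup_of_le n (le_of_eq ?_)
      have : Fn n x = F x := by
        simp only [hFndef]; exact Set.indicator_of_mem hmem F
      exact this.symm
  have hbound : ∀ n, (∫⁻ x, Fn n x ∂μ) ≤ ENNReal.ofReal (Cn n) := by
    intro n
    have hIooSub : Ioo (a n) (b n) ⊆ Ioo (0:ℝ) 1 := fun x hx =>
      ⟨lt_trans (hapos n) hx.1, lt_trans hx.2 (hblt n)⟩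
    have e1 : (∫⁻ x, Fn n x ∂μ) = ∫⁻ x in Ioo (a n) (b n), F x ∂μ :=
      lintegral_indicator measurableSet_Ioo _
    have e2 : (∫⁻ x in Ioo (a n) (b n), F x ∂μ)
        = ∫⁻ x in Ioo (a n) (b n), F x ∂volume := by
      rw [hμdef, Measure.restrict_restrict measurableSet_Ioo,
        inter_eq_self_of_subset_left hIooSub]
    have hIccsub : Icc (a n) (b n) ⊆ Ioo (0:ℝ) 1 := fun x hx =>
      ⟨lt_of_lt_of_le (hapos n) hx.1, lt_of_le_of_lt hx.2 (hblt n)⟩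
    have hInt : IntegrableOn f (Ioo (a n) (b n)) volume :=
      ((hfc.mono hIccsub).integrableOn_Icc).mono_set Ioo_subset_Icc_self
    have hnn2 : 0 ≤ᵐ[volume.restrict (Ioo (a n) (b n))] f := by
      filter_upwards [ae_restrict_mem measurableSet_Ioo] with x hx
      have h0 : 0 < x := lt_trans (hapos n) hx.1
      positivity
    have e3 : (∫⁻ x in Ioo (a n) (b n), F x ∂volume)
        = ENNReal.ofReal (∫ x in Ioo (a n) (b n), f x) :=
      (ofReal_integral_eq_lintegral_ofReal hInt hnn2).symm
    have e4 : (∫ x in Ioo (a n) (b n), f x) = ∫ x in (a n)..(b n), f x := by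
      rw [intervalIntegral.integral_of_le (haleb n), integral_Ioc_eq_integral_Ioo]
    have hkey := hardy_key δ hδ1 u u' hderiv hcont hint' (a n) (b n)
      (hapos n) (haleb n) (hblt n)
    have e5 : (∫ x in (a n)..(b n), f x) ≤ Cn n := by
      simp only [hfdef, hCndef]
      exact hkey
    rw [e1, e2, e3, e4]
    exact ENNReal.ofReal_le_ofReal e5
  have hlim : (∫⁻ ρ, F ρ ∂μ) ≤ ENNReal.ofReal C := by
    have e1 : (∫⁻ ρ, F ρ ∂μ) = ∫⁻ x, (⨆ n, Fn n x) ∂μ := by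
      apply lintegral_congr_ae
      filter_upwards [ae_restrict_mem measurableSet_Ioo] with x hx
      exact (hsup x hx).symm
    have e2 : (∫⁻ x, (⨆ n, Fn n x) ∂μ) = ⨆ n, ∫⁻ x, Fn n x ∂μ :=
      lintegral_iSup' hFnaem (Eventually.of_forall hFnmono)
    rw [e1, e2]
    apply iSup_le
    intro n
    have htend : Tendsto (fun k => ENNReal.ofReal (Cn k)) atTop (𝓝 (ENNReal.ofReal C)) :=
      (ENNReal.continuous_ofReal.tendsto C).comp hCn
    apply ge_of_tendsto htend
    filter_upwards [eventually_ge_atTop n] with k hk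
    calc (∫⁻ x, Fn n x ∂μ) ≤ ∫⁻ x, Fn k x ∂μ :=
          lintegral_mono fun x => hFnmono x hk
      _ ≤ ENNReal.ofReal (Cn k) := hbound k
  calc ∫ ρ in Ioo (0:ℝ) 1, ρ ^ (-δ) * (u ρ) ^ 2 = (∫⁻ ρ, F ρ ∂μ).toReal := heq
    _ ≤ (ENNReal.ofReal C).toReal := ENNReal.toReal_mono ENNReal.ofReal_ne_top hlim
    _ = C := ENNReal.toReal_ofReal hC0
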